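/- arXiv:1002.4647 — 4 statements merged into one kernel-verified Lean document; each statement's English description precedes it below -/
import Mathlib

section
/- The function u(θ) = ∫₀^θ √(1 + cos²t)/cos t dt + θ, defined for 0 < θ < π/2, satisfies u_θ = √(1+cos²θ)/cos θ + 1, tends to 0 as θ → 0⁺, and tends to +∞ as θ → (π/2)⁻; moreover it satisfies the first integral (1 − sin²θ)(u_θ² − 2u_θ) = 1. -/
open Real Set Filter

/-- The invariant minimal-graph solution with parameter C = 1 over the first quadrant:
u(θ) = ∫₀^θ √(1 + cos²t)/cos t dt + θ. -/
noncomputable def uC1 (θ : ℝ) : ℝ :=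
  (∫ t in (0:ℝ)..θ, Real.sqrt (1 + Real.cos t ^ 2) / Real.cos t) + θ

private noncomputable def fC1 (t : ℝ) : ℝ := Real.sqrt (1 + Real.cos t ^ 2) / Real.cos t

private lemma contOn : ContinuousOn fC1 (Ioo (-(π/2)) (π/2)) := by
  apply ContinuousOn.div
  · exact ((continuous_const.add ((Real.continuous_cos.pow 2))).sqrt).continuousOn
  · exact Real.continuous_cos.continuousOn
  · intro t ht; exact (Real.cos_pos_of_mem_Ioo ht).ne'

private lemma hasDeriv {θ : ℝ} (hθ : θ ∈ Ioo (-(π/2)) (π/2)) :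
    HasDerivAt uC1 (fC1 θ + 1) θ := by
  have hopen : IsOpen (Ioo (-(π/2)) (π/2)) := isOpen_Ioo
  have h0mem : (0:ℝ) ∈ Ioo (-(π/2)) (π/2) := by
    constructor <;> linarith [Real.pi_pos]
  have hsub : uIcc 0 θ ⊆ Ioo (-(π/2)) (π/2) :=
    (Set.ordConnected_Ioo).uIcc_subset h0mem hθ
  have hint : IntervalIntegrable fC1 MeasureTheory.volume 0 θ :=
    (contOn.mono hsub).intervalIntegrable
  have hmeas : StronglyMeasurableAtFilter fC1 (nhds θ) :=
    contOn.stronglyMeasurableAtFilter hopen θ hθ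
  have hc : ContinuousAt fC1 θ := contOn.continuousAt (hopen.mem_nhds hθ)
  have h1 := intervalIntegral.integral_hasDerivAt_right hint hmeas hc
  exact h1.add (hasDerivAt_id θ)

/-- The function u(θ) = ∫₀^θ √(1+cos²t)/cos t dt + θ on (0, π/2) satisfies
u_θ = √(1+cos²θ)/cos θ + 1, tends to 0 as θ → 0⁺ and to +∞ as θ → (π/2)⁻, and obeys the
first integral (1 − sin²θ)(u_θ² − 2u_θ) = 1. -/
theorem stmt_6 :
    (∀ θ ∈ Ioo 0 (π / 2),
      HasDerivAt uC1 (Real.sqrt (1 + Real.cos θ ^ 2) / Real.cos θ + 1) θ) ∧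
    Tendsto uC1 (nhdsWithin 0 (Ioi 0)) (nhds 0) ∧
    Tendsto uC1 (nhdsWithin (π / 2) (Iio (π / 2))) atTop ∧
    (∀ θ ∈ Ioo 0 (π / 2),
      (1 - Real.sin θ ^ 2) *
        ((Real.sqrt (1 + Real.cos θ ^ 2) / Real.cos θ + 1) ^ 2
          - 2 * (Real.sqrt (1 + Real.cos θ ^ 2) / Real.cos θ + 1)) = 1) := by
  have pi2pos : 0 < π / 2 := by positivity
  refine ⟨?_, ?_, ?_, ?_⟩
  · intro θ hθ
    exact hasDeriv ⟨by linarith [hθ.1], hθ.2⟩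
  · -- continuity at 0
    have h0 : uC1 0 = 0 := by simp [uC1]
    have hd := hasDeriv (θ := 0) ⟨by linarith, pi2pos⟩
    have hc : ContinuousAt uC1 0 := hd.continuousAt
    have := (hc.continuousWithinAt (s := Ioi 0)).tendsto
    rwa [h0] at this
  · -- divergence at π/2
    have key : ∀ θ ∈ Ioo 0 (π/2), -Real.log (Real.cos θ) ≤ uC1 θ := by
      intro θ hθ
      have hsub : Icc 0 θ ⊆ Ioo (-(π/2)) (π/2) := fun x hx =>
        ⟨by linarith [hx.1], lt_of_le_of_lt hx.2 hθ.2⟩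
      have hint : IntervalIntegrable fC1 MeasureTheory.volume 0 θ :=
        (contOn.mono (by rwa [uIcc_of_le hθ.1.le])).intervalIntegrable
      have htanc : ContinuousOn Real.tan (Icc 0 θ) := by
        apply Real.continuousOn_tan.mono
        intro x hx
        exact (Real.cos_pos_of_mem_Ioo (hsub hx)).ne'
      have htint : IntervalIntegrable Real.tan MeasureTheory.volume 0 θ :=
        (htanc.mono (by rw [uIcc_of_le hθ.1.le])).intervalIntegrable
      have hmono : ∫ t in (0:ℝ)..θ, Real.tan t ≤ ∫ t in (0:ℝ)..θ, fC1 t := by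
        apply intervalIntegral.integral_mono_on hθ.1.le htint hint
        intro x hx
        have hc := Real.cos_pos_of_mem_Ioo (hsub hx)
        have hs : Real.sin x ≤ 1 := Real.sin_le_one x
        have h1 : (1:ℝ) ≤ Real.sqrt (1 + Real.cos x ^ 2) := by
          rw [show (1:ℝ) = Real.sqrt 1 from (Real.sqrt_one).symm]
          exact Real.sqrt_le_sqrt (by nlinarith [Real.sqrt_one])
        rw [Real.tan_eq_sin_div_cos]
        unfold fC1
        gcongr
        · exact hs.trans h1
      have htan : ∫ t in (0:ℝ)..θ, Real.tan t = -Real.log (Real.cos θ) := by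
        have hderiv : ∀ x ∈ uIcc 0 θ,
            HasDerivAt (fun y => -Real.log (Real.cos y)) (Real.tan x) x := by
          intro x hx
          rw [uIcc_of_le hθ.1.le] at hx
          have hc := Real.cos_pos_of_mem_Ioo (hsub hx)
          have h1 : HasDerivAt Real.cos (-Real.sin x) x := Real.hasDerivAt_cos x
          have h2 : HasDerivAt (fun y => Real.log (Real.cos y))
              (-Real.sin x / Real.cos x) x := h1.log hc.ne'
          have h3 := h2.neg
          refine h3.congr_deriv ?_
          rw [Real.tan_eq_sin_div_cos]; ring
        rw [intervalIntegral.integral_eq_sub_of_hasDerivAt hderiv htint]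
        simp
      have h2 : -Real.log (Real.cos θ) ≤ ∫ t in (0:ℝ)..θ, fC1 t := htan ▸ hmono
      unfold uC1
      unfold fC1 at h2
      linarith [hθ.1]
    have hlog : Tendsto (fun θ => -Real.log (Real.cos θ))
        (nhdsWithin (π/2) (Iio (π/2))) atTop := by
      have hmem : π/2 ∈ Ioc 0 (π/2) := ⟨pi2pos, le_refl _⟩
      have hcos : Tendsto Real.cos (nhdsWithin (π/2) (Iio (π/2))) (nhdsWithin 0 (Ioi 0)) := by
        apply tendsto_nhdsWithin_of_tendsto_nhds_of_eventually_within
        · have h := Real.continuous_cos.tendsto (π/2)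
          simpa using h.mono_left nhdsWithin_le_nhds
        · filter_upwards [Ioo_mem_nhdsLT_of_mem hmem] with x hx
          exact Real.cos_pos_of_mem_Ioo ⟨by linarith [hx.1], hx.2⟩
      have h1 := Real.tendsto_log_nhdsGT_zero.comp hcos
      exact tendsto_neg_atBot_atTop.comp h1
    apply tendsto_atTop_mono' _ _ hlog
    filter_upwards [Ioo_mem_nhdsLT_of_mem (show π/2 ∈ Ioc 0 (π/2) from ⟨pi2pos, le_refl _⟩)]
      with θ hθ
    exact key θ hθ
  · intro θ hθ
    have hc : 0 < Real.cos θ := Real.cos_pos_of_mem_Ioo ⟨by linarith [hθ.1], hθ.2⟩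
    have hsq : Real.sqrt (1 + Real.cos θ ^ 2) ^ 2 = 1 + Real.cos θ ^ 2 :=
      Real.sq_sqrt (by positivity)
    have hsc : Real.sin θ ^ 2 + Real.cos θ ^ 2 = 1 := Real.sin_sq_add_cos_sq θ
    have h1 : 1 - Real.sin θ ^ 2 = Real.cos θ ^ 2 := by linarith
    have h2 : (Real.sqrt (1 + Real.cos θ ^ 2) / Real.cos θ + 1) ^ 2
        - 2 * (Real.sqrt (1 + Real.cos θ ^ 2) / Real.cos θ + 1)
        = 1 / Real.cos θ ^ 2 := by
      have hd : (Real.sqrt (1 + Real.cos θ ^ 2) / Real.cos θ) ^ 2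
          = (1 + Real.cos θ ^ 2) / Real.cos θ ^ 2 := by rw [div_pow, hsq]
      have h3 : (Real.sqrt (1 + Real.cos θ ^ 2) / Real.cos θ + 1) ^ 2
          - 2 * (Real.sqrt (1 + Real.cos θ ^ 2) / Real.cos θ + 1)
          = (Real.sqrt (1 + Real.cos θ ^ 2) / Real.cos θ) ^ 2 - 1 := by ring
      rw [h3, hd]
      field_simp
      ring
    rw [h1, h2]
    field_simp
end

section
/- Let u be a C² solution of the minimal surface equation in PSL₂(ℝ)~ over the upper half-plane that depends only on y, i.e. u(x,y) = u(y) for y > 0. Then ω u_yy − (1/2) u_y ω_y = 0 where ω = 2 + y² u_y², and hence either u is constant or u_y = ±√2/√(C² − y²) for some constant C > 0; in the latter case u(y) = ±√2 · arcsin(y/C) + const on 0 < y < C. -/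
open Real Set

noncomputable def pdx (f : ℝ × ℝ → ℝ) (p : ℝ × ℝ) : ℝ := fderiv ℝ f p (1, 0)
noncomputable def pdy (f : ℝ × ℝ → ℝ) (p : ℝ × ℝ) : ℝ := fderiv ℝ f p (0, 1)

/-- ω(y) = 2 + y² u_y² for a solution u = u(y) depending only on y. -/
noncomputable def omegaPar (u : ℝ → ℝ) (y : ℝ) : ℝ :=
  2 + y ^ 2 * (deriv u y) ^ 2

lemma aux_const_of_deriv {f : ℝ → ℝ} {a b : ℝ} (h : ∀ y ∈ Ioo a b, HasDerivAt f 0 y)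
    {x y : ℝ} (hx : x ∈ Ioo a b) (hy : y ∈ Ioo a b) : f x = f y := by
  have hd : DifferentiableOn ℝ f (Ioo a b) := fun t ht =>
    ((h t ht).differentiableAt).differentiableWithinAt
  refine (convex_Ioo a b).is_const_of_fderivWithin_eq_zero hd (fun t ht => ?_) hx hy
  rw [fderivWithin_of_isOpen isOpen_Ioo ht, (h t ht).hasFDerivAt.fderiv]
  ext; simp

lemma aux_pdy_U {u : ℝ → ℝ} {p : ℝ × ℝ} (hy : HasDerivAt u (deriv u p.2) p.2) :
    HasFDerivAt (fun q : ℝ × ℝ => u q.2)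
      ((deriv u p.2) • ContinuousLinearMap.snd ℝ ℝ ℝ) p :=
  HasDerivAt.comp_hasFDerivAt p hy hasFDerivAt_snd


/-- **Minimal graphs in PSL₂(ℝ)~ invariant under parabolic isometries.**
In the upper half-plane model (λ = 1/y, α = −1, β = −y u_y, W = √(1+α²+β²)), let U be a
C² solution of div_{ℝ²}((λα/W)∂_x + (λβ/W)∂_y) = 0 on the strip {a < y < b} ⊆ {y > 0}
depending only on y: U(x,y) = u(y).  Then ω u_yy − (1/2) u_y ω_y = 0 with ω = 2 + y²u_y²,
and hence either u is constant or u_y = ±√2/√(C² − y²) for some constant C > 0; in the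
latter case u(y) = ±√2·arcsin(y/C) + const. -/
theorem stmt_9 (a b : ℝ) (ha : 0 ≤ a) (hab : a < b)
    (U alpha beta W : ℝ × ℝ → ℝ)
    (hU : ContDiffOn ℝ 2 U {p : ℝ × ℝ | a < p.2 ∧ p.2 < b})
    (halpha : ∀ p, alpha p = -1)
    (hbeta : ∀ p, beta p = -p.2 * pdy U p)
    (hW : ∀ p, W p = Real.sqrt (1 + alpha p ^ 2 + beta p ^ 2))
    (hmse : ∀ p : ℝ × ℝ, a < p.2 → p.2 < b →
      pdx (fun q => (1 / q.2) * alpha q / W q) p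
        + pdy (fun q => (1 / q.2) * beta q / W q) p = 0)
    (u : ℝ → ℝ) (hu : ContDiffOn ℝ 2 u (Ioo a b))
    (hinv : ∀ p : ℝ × ℝ, U p = u p.2) :
    (∀ y ∈ Ioo a b,
      omegaPar u y * deriv (deriv u) y - (1 / 2) * deriv u y * deriv (omegaPar u) y = 0) ∧
    ((∃ c : ℝ, ∀ y ∈ Ioo a b, u y = c) ∨
      ∃ C : ℝ, 0 < C ∧
        (((∀ y ∈ Ioo a b, deriv u y = Real.sqrt 2 / Real.sqrt (C ^ 2 - y ^ 2)) ∧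
            ∃ K : ℝ, ∀ y ∈ Ioo a b, u y = Real.sqrt 2 * Real.arcsin (y / C) + K) ∨
          ((∀ y ∈ Ioo a b, deriv u y = -(Real.sqrt 2 / Real.sqrt (C ^ 2 - y ^ 2))) ∧
            ∃ K : ℝ, ∀ y ∈ Ioo a b, u y = -(Real.sqrt 2 * Real.arcsin (y / C)) + K))) := by
  have hUfun : U = fun p : ℝ × ℝ => u p.2 := funext hinv
  have hIopen : IsOpen {p : ℝ × ℝ | a < p.2 ∧ p.2 < b} :=
    (isOpen_lt continuous_const continuous_snd).and (isOpen_lt continuous_snd continuous_const)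
  have hder1 : ContDiffOn ℝ 1 (deriv u) (Ioo a b) :=
    hu.deriv_of_isOpen isOpen_Ioo (by norm_num)
  have hv : ∀ y ∈ Ioo a b, HasDerivAt u (deriv u y) y := fun y hy =>
    ((hu.contDiffAt (isOpen_Ioo.mem_nhds hy)).differentiableAt (by norm_num)).hasDerivAt
  have hv' : ∀ y ∈ Ioo a b, HasDerivAt (deriv u) (deriv (deriv u) y) y := fun y hy =>
    ((hder1.contDiffAt (isOpen_Ioo.mem_nhds hy)).differentiableAt (by norm_num)).hasDerivAt
  -- the main pointwise step
  have main : ∀ y ∈ Ioo a b,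
      (omegaPar u y * deriv (deriv u) y
        - (1 / 2) * deriv u y * deriv (omegaPar u) y = 0) ∧
      HasDerivAt (fun t => deriv u t / Real.sqrt (2 + (t * deriv u t)^2)) 0 y := by
    intro y hy
    have hy0 : 0 < y := lt_of_le_of_lt ha hy.1
    set v := deriv u y with hvdef
    set v' := deriv (deriv u) y with hv'def
    have hwpos : (0:ℝ) < 2 + (y * v)^2 := by positivity
    set s := Real.sqrt (2 + (y * v)^2) with hsdef
    have hspos : 0 < s := Real.sqrt_pos.mpr hwpos
    have hs2 : s^2 = 2 + (y*v)^2 := Real.sq_sqrt hwpos.le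
    have hA : HasDerivAt (fun t => t * deriv u t) (1 * v + y * v') y :=
      (hasDerivAt_id y).mul (hv' y hy)
    have hA2 : HasDerivAt (fun t => (t * deriv u t)^2) (2*(y*v)*(1*v + y*v')) y := by
      have h : HasDerivAt (fun t => (t * deriv u t)^2) _ y := hA.pow 2
      convert h using 1
      push_cast
      ring
    have hw : HasDerivAt (fun t => 2 + (t * deriv u t)^2) (2*(y*v)*(1*v + y*v')) y :=
      hA2.const_add 2
    have hsq : HasDerivAt (fun t => Real.sqrt (2 + (t * deriv u t)^2))
        (1/(2*s) * (2*(y*v)*(1*v + y*v'))) y :=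
      (Real.hasDerivAt_sqrt hwpos.ne').comp y hw
    have hF : HasDerivAt (fun t => -(deriv u t) / Real.sqrt (2 + (t * deriv u t)^2))
        (((-v') * s - (-v) * (1/(2*s) * (2*(y*v)*(1*v + y*v')))) / s^2) y :=
      ((hv' y hy).neg).div hsq hspos.ne'
    -- rewrite W and pdy U on the strip
    have hpS : ((0:ℝ), y) ∈ {p : ℝ × ℝ | a < p.2 ∧ p.2 < b} := ⟨hy.1, hy.2⟩
    have hmem := hIopen.mem_nhds hpS
    have hWq : ∀ q : ℝ × ℝ, q ∈ {p : ℝ × ℝ | a < p.2 ∧ p.2 < b} →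
        W q = Real.sqrt (2 + (q.2 * deriv u q.2)^2) ∧ pdy U q = deriv u q.2 := by
      intro q hq
      have hpd : pdy U q = deriv u q.2 := by
        rw [pdy, hUfun, (aux_pdy_U (hv q.2 ⟨hq.1, hq.2⟩)).fderiv]
        simp
      refine ⟨?_, hpd⟩
      rw [hW, halpha, hbeta, hpd]
      congr 1
      ring
    -- x-derivative term vanishes
    obtain ⟨dg, hgd⟩ : ∃ d, HasDerivAt
        (fun t : ℝ => -(t⁻¹) / Real.sqrt (2 + (t * deriv u t)^2)) d y :=
      ⟨_, ((hasDerivAt_inv hy0.ne').neg).div hsq hspos.ne'⟩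
    have hpdx : pdx (fun q => (1 / q.2) * alpha q / W q) ((0:ℝ), y) = 0 := by
      have e1 : (fun q : ℝ × ℝ => (1 / q.2) * alpha q / W q) =ᶠ[nhds ((0:ℝ), y)]
          (fun q : ℝ × ℝ => -(q.2⁻¹) / Real.sqrt (2 + (q.2 * deriv u q.2)^2)) := by
        filter_upwards [hmem] with q hq
        rw [halpha, (hWq q hq).1]
        ring
      have hgF : HasFDerivAt
          (fun q : ℝ × ℝ => -(q.2⁻¹) / Real.sqrt (2 + (q.2 * deriv u q.2)^2))
          (dg • ContinuousLinearMap.snd ℝ ℝ ℝ) ((0:ℝ), y) :=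
        (HasDerivAt.comp_hasFDerivAt (f := Prod.snd) ((0:ℝ), y) hgd (hasFDerivAt_snd (𝕜 := ℝ) (E := ℝ) (F := ℝ) (p := ((0:ℝ), y))) :)
      rw [pdx, e1.fderiv_eq, hgF.fderiv]
      simp
    -- y-derivative term
    have hpdy : pdy (fun q => (1 / q.2) * beta q / W q) ((0:ℝ), y)
        = ((-v') * s - (-v) * (1/(2*s) * (2*(y*v)*(1*v + y*v')))) / s^2 := by
      have e2 : (fun q : ℝ × ℝ => (1 / q.2) * beta q / W q) =ᶠ[nhds ((0:ℝ), y)]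
          (fun q : ℝ × ℝ => -(deriv u q.2) / Real.sqrt (2 + (q.2 * deriv u q.2)^2)) := by
        filter_upwards [hmem] with q hq
        have hq0 : q.2 ≠ 0 := (lt_of_le_of_lt ha hq.1).ne'
        rw [hbeta, (hWq q hq).1, (hWq q hq).2]
        congr 1
        field_simp
      have hFc : HasFDerivAt
          (fun q : ℝ × ℝ => -(deriv u q.2) / Real.sqrt (2 + (q.2 * deriv u q.2)^2))
          ((((-v') * s - (-v) * (1/(2*s) * (2*(y*v)*(1*v + y*v')))) / s^2)
            • ContinuousLinearMap.snd ℝ ℝ ℝ) ((0:ℝ), y) :=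
        (HasDerivAt.comp_hasFDerivAt (f := Prod.snd) ((0:ℝ), y) hF (hasFDerivAt_snd (𝕜 := ℝ) (E := ℝ) (F := ℝ) (p := ((0:ℝ), y))) :)
      rw [pdy, e2.fderiv_eq, hFc.fderiv]
      simp
    have hdF0 : ((-v') * s - (-v) * (1/(2*s) * (2*(y*v)*(1*v + y*v')))) / s^2 = 0 := by
      have h0 := hmse ((0:ℝ), y) hy.1 hy.2
      rw [hpdx, hpdy] at h0
      linarith
    have hnum : (-v') * s - (-v) * (1/(2*s) * (2*(y*v)*(1*v + y*v'))) = 0 := by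
      rcases div_eq_zero_iff.mp hdF0 with h | h
      · exact h
      · exact absurd h (pow_ne_zero 2 hspos.ne')
    have hkey : -v' * (2 + (y*v)^2) + v * (y*v) * (1*v + y*v') = 0 := by
      have h1 := congrArg (fun z => z * (2*s)) hnum
      have h2 : -v' * (s*s) * 2 + v * (2*(y*v)*(1*v + y*v')) = 0 := by
        field_simp at h1
        nlinarith [h1, hspos]
      have h3 : s * s = 2 + (y*v)^2 := Real.mul_self_sqrt hwpos.le
      linear_combination h2/2 + v' * h3
    constructor
    · -- the ODE
      have homega : HasDerivAt (omegaPar u) (2*y^(2-1) * v^2 + y^2 * (2*v^(2-1)*v')) y := by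
        have h : HasDerivAt (omegaPar u) _ y :=
          ((hasDerivAt_pow 2 y).mul
            ((hv' y hy).pow 2 : HasDerivAt (fun t => (deriv u t)^2) _ y)).const_add (2:ℝ)
        convert h using 1 <;> (push_cast [Pi.pow_apply]; ring)
      have hdo : deriv (omegaPar u) y = 2*y^(2-1) * v^2 + y^2 * (2*v^(2-1)*v') :=
        homega.deriv
      have hop : omegaPar u y = 2 + y^2 * v^2 := rfl
      rw [hdo, hop]
      linear_combination -hkey
    · -- zero derivative of u' / sqrt(omega)
      have h : HasDerivAt (fun t => deriv u t / Real.sqrt (2 + (t * deriv u t)^2)) _ y :=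
        (hv' y hy).div hsq hspos.ne'
      convert h using 1
      rw [show (v' * s - v * (1/(2*s) * (2*(y*v)*(1*v + y*v')))) / s^2
          = -(((-v') * s - (-v) * (1/(2*s) * (2*(y*v)*(1*v + y*v')))) / s^2) by ring,
        hdF0, neg_zero]
  refine ⟨fun y hy => (main y hy).1, ?_⟩
  obtain ⟨y₀, hy₀⟩ : ∃ t, t ∈ Ioo a b := ⟨(a+b)/2, ⟨by linarith, by linarith⟩⟩
  set G : ℝ → ℝ := fun t => deriv u t / Real.sqrt (2 + (t * deriv u t)^2) with hGdef
  set k := G y₀ with hkdef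
  have hsfact : ∀ y ∈ Ioo a b, deriv u y = k * Real.sqrt (2 + (y * deriv u y)^2) := by
    intro y hyy
    have hwpos : (0:ℝ) < 2 + (y * deriv u y)^2 := by positivity
    have hspos := Real.sqrt_pos.mpr hwpos
    have hGy : G y = k := aux_const_of_deriv (fun t ht => (main t ht).2) hyy hy₀
    rw [hGdef] at hGy
    simp only at hGy
    rw [div_eq_iff hspos.ne'] at hGy
    linarith [hGy]
  clear_value k
  by_cases hk : k = 0
  · left
    refine ⟨u y₀, fun y hyy => aux_const_of_deriv (fun t ht => ?_) hyy hy₀⟩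
    have h := hsfact t ht
    rw [hk, zero_mul] at h
    have h2 := hv t ht
    rw [h] at h2
    exact h2
  · right
    have hkabs : 0 < |k| := abs_pos.mpr hk
    set C := |k|⁻¹ with hCdef
    have hCpos : 0 < C := inv_pos.mpr hkabs
    have hCk : C^2 * k^2 = 1 := by
      rw [hCdef, ← sq_abs k]
      field_simp
    clear_value C
    have hfact : ∀ y ∈ Ioo a b, 0 < C^2 - y^2 ∧ y < C ∧
        (deriv u y)^2 = 2 / (C^2 - y^2) := by
      intro y hyy
      have hy0 : 0 < y := lt_of_le_of_lt ha hyy.1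
      have hwpos : (0:ℝ) < 2 + (y * deriv u y)^2 := by positivity
      have hspos := Real.sqrt_pos.mpr hwpos
      have hs2 : Real.sqrt (2 + (y * deriv u y)^2)^2 = 2 + (y * deriv u y)^2 :=
        Real.sq_sqrt hwpos.le
      have hvk := hsfact y hyy
      have hv2 : (deriv u y)^2 * (1 - k^2 * y^2) = 2 * k^2 := by
        have h5 : (deriv u y)^2 = k^2 * (2 + (y * deriv u y)^2) := by
          conv_lhs => rw [hvk]
          rw [mul_pow, hs2]
        linear_combination h5
      have hk2 : 0 < k^2 := (sq_abs k) ▸ pow_pos hkabs 2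
      have hvne : deriv u y ≠ 0 := by
        rw [hvk]
        exact mul_ne_zero hk hspos.ne'
      have hvpos2 : 0 < (deriv u y)^2 := (sq_abs (deriv u y)) ▸ pow_pos (abs_pos.mpr hvne) 2
      have hpos1 : 0 < 1 - k^2 * y^2 := by
        by_contra h
        push_neg at h
        nlinarith [mul_nonpos_of_nonneg_of_nonpos hvpos2.le h, hk2]
      have hposC : 0 < C^2 - y^2 := by
        by_contra h
        push_neg at h
        nlinarith [mul_nonpos_of_nonneg_of_nonpos hk2.le h, hCk, hpos1]
      have hyC : y < C := by
        have h6 : y^2 < C^2 := by nlinarith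
        exact lt_of_pow_lt_pow_left₀ 2 hCpos.le h6
      refine ⟨hposC, hyC, ?_⟩
      rw [eq_div_iff hposC.ne']
      have h7 : (deriv u y)^2 * (C^2 - y^2) * k^2 = 2 * k^2 := by
        linear_combination hv2 + (deriv u y)^2 * hCk
      exact mul_right_cancel₀ hk2.ne' h7
    refine ⟨C, hCpos, ?_⟩
    rcases lt_or_gt_of_ne hk with hkneg | hkpos
    · -- k < 0 : negative branch
      right
      have hderiv : ∀ y ∈ Ioo a b, deriv u y = -(Real.sqrt 2 / Real.sqrt (C^2 - y^2)) := by
        intro y hyy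
        obtain ⟨hposC, hyC, hv2⟩ := hfact y hyy
        have hwpos : (0:ℝ) < 2 + (y * deriv u y)^2 := by positivity
        have hspos := Real.sqrt_pos.mpr hwpos
        have hvneg : deriv u y < 0 := by
          rw [hsfact y hyy]
          exact mul_neg_of_neg_of_pos hkneg hspos
        have habs : -(deriv u y) = Real.sqrt ((deriv u y)^2) := by
          rw [← Real.sqrt_sq (neg_nonneg.mpr hvneg.le), neg_pow]
          norm_num
        have : -(deriv u y) = Real.sqrt 2 / Real.sqrt (C^2 - y^2) := by
          rw [habs, hv2, Real.sqrt_div (by norm_num : (0:ℝ) ≤ 2)]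
        linarith
      refine ⟨hderiv, ⟨u y₀ + Real.sqrt 2 * Real.arcsin (y₀/C), fun y hyy => ?_⟩⟩
      have hcon := aux_const_of_deriv (f := fun t => u t + Real.sqrt 2 * Real.arcsin (t/C))
        (fun t ht => ?_) hyy hy₀
      · linarith [hcon]
      · obtain ⟨hposC, htC, hv2⟩ := hfact t ht
        have ht0 : 0 < t := lt_of_le_of_lt ha ht.1
        have hne1 : t/C ≠ -1 := by
          intro he
          have h8 := div_pos ht0 hCpos
          rw [he] at h8
          linarith
        have hne2 : t/C ≠ 1 := by
          have : t/C < 1 := (div_lt_one hCpos).mpr htC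
          linarith
        have harc : HasDerivAt (fun z => Real.arcsin (z/C)) (1/Real.sqrt (1-(t/C)^2) * (1/C)) t :=
          ((Real.hasDerivAt_arcsin hne1 hne2).comp t ((hasDerivAt_id t).div_const C) :)
        have hsqrtC : Real.sqrt (1-(t/C)^2) = Real.sqrt (C^2-t^2) / C := by
          rw [show (1:ℝ) - (t/C)^2 = (C^2-t^2)/C^2 by field_simp,
            Real.sqrt_div hposC.le, Real.sqrt_sq hCpos.le]
        have hspos2 : 0 < Real.sqrt (C^2 - t^2) := Real.sqrt_pos.mpr hposC
        have hfull : HasDerivAt (fun t => u t + Real.sqrt 2 * Real.arcsin (t/C)) _ t :=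
          (hv t ht).add ((harc).const_mul (Real.sqrt 2))
        convert hfull using 1
        rw [hderiv t ht, hsqrtC]
        field_simp
        ring
    · -- k > 0 : positive branch
      left
      have hderiv : ∀ y ∈ Ioo a b, deriv u y = Real.sqrt 2 / Real.sqrt (C^2 - y^2) := by
        intro y hyy
        obtain ⟨hposC, hyC, hv2⟩ := hfact y hyy
        have hwpos : (0:ℝ) < 2 + (y * deriv u y)^2 := by positivity
        have hspos := Real.sqrt_pos.mpr hwpos
        have hvpos : 0 < deriv u y := by
          rw [hsfact y hyy]
          exact mul_pos hkpos hspos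
        rw [← Real.sqrt_sq hvpos.le, hv2, Real.sqrt_div (by norm_num : (0:ℝ) ≤ 2)]
      refine ⟨hderiv, ⟨u y₀ - Real.sqrt 2 * Real.arcsin (y₀/C), fun y hyy => ?_⟩⟩
      have hcon := aux_const_of_deriv (f := fun t => u t - Real.sqrt 2 * Real.arcsin (t/C))
        (fun t ht => ?_) hyy hy₀
      · linarith [hcon]
      · obtain ⟨hposC, htC, hv2⟩ := hfact t ht
        have ht0 : 0 < t := lt_of_le_of_lt ha ht.1
        have hne1 : t/C ≠ -1 := by
          intro he
          have h8 := div_pos ht0 hCpos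
          rw [he] at h8
          linarith
        have hne2 : t/C ≠ 1 := by
          have : t/C < 1 := (div_lt_one hCpos).mpr htC
          linarith
        have harc : HasDerivAt (fun z => Real.arcsin (z/C)) (1/Real.sqrt (1-(t/C)^2) * (1/C)) t :=
          ((Real.hasDerivAt_arcsin hne1 hne2).comp t ((hasDerivAt_id t).div_const C) :)
        have hsqrtC : Real.sqrt (1-(t/C)^2) = Real.sqrt (C^2-t^2) / C := by
          rw [show (1:ℝ) - (t/C)^2 = (C^2-t^2)/C^2 by field_simp,
            Real.sqrt_div hposC.le, Real.sqrt_sq hCpos.le]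
        have hspos2 : 0 < Real.sqrt (C^2 - t^2) := Real.sqrt_pos.mpr hposC
        have hfull : HasDerivAt (fun t => u t - Real.sqrt 2 * Real.arcsin (t/C)) _ t :=
          (hv t ht).sub ((harc).const_mul (Real.sqrt 2))
        convert hfull using 1
        rw [hderiv t ht, hsqrtC]
        field_simp
        ring
end

section
/- Let T₁, T₂, T₃ be the sides of a geodesic triangle in ℍ² with vertices Q, Q₁, Q₂, and suppose ϕ is a function whose differential dψ satisfies ∫_{QQ₁} dψ = |QQ₁|, ∫_{Q₂Q} dψ = |QQ₂|, |∫_{Q₁Q₂} dψ| ≤ |Q₁Q₂|, and ∫_{∂Δ} dψ = 0 over the triangle boundary. Then |QQ₁| + |QQ₂| ≤ |Q₁Q₂|, contradicting the strict triangle inequality in ℍ²; hence such a configuration is impossible. -/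
/-- **The triangle contradiction in the Divergence Set Structure Theorem.**
Q, Q₁, Q₂ are the vertices of a nondegenerate geodesic triangle in the hyperbolic plane
(so the strict triangle inequality d(Q,Q₁) + d(Q,Q₂) > d(Q₁,Q₂) holds).  If the flux
integrals of a conjugate differential dψ over the sides satisfy ∫_{QQ₁} dψ = |QQ₁|,
∫_{Q₂Q} dψ = |QQ₂|, |∫_{Q₁Q₂} dψ| ≤ |Q₁Q₂| and ∫_{∂Δ} dψ = 0, then
|QQ₁| + |QQ₂| ≤ |Q₁Q₂|, contradicting the strict triangle inequality: such a
configuration is impossible. -/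
theorem stmt_16 (Q Q₁ Q₂ : UpperHalfPlane)
    (hstrict : dist Q₁ Q₂ < dist Q Q₁ + dist Q Q₂)
    (I₁ I₂ I₃ : ℝ)
    (h1 : I₁ = dist Q Q₁) (h2 : |I₂| ≤ dist Q₁ Q₂) (h3 : I₃ = dist Q Q₂)
    (hclosed : I₁ + I₂ + I₃ = 0) :
    False := by
  have hd1 : (0:ℝ) ≤ dist Q Q₁ := dist_nonneg
  have hd2 : (0:ℝ) ≤ dist Q Q₂ := dist_nonneg
  have : |I₂| = dist Q Q₁ + dist Q Q₂ := by
    have : I₂ = -(dist Q Q₁ + dist Q Q₂) := by linarith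
    rw [this, abs_neg, abs_of_nonneg (by linarith)]
  linarith
end

section
/- Suppose u₁ and u₂ are two solutions of the minimal surface equation in a domain Ω ⊆ ℍ² (of Jenkins–Serrin type) with identical boundary data, with u₁ − u₂ nonconstant and Ω_ε = {u₁ − u₂ > ε} nonempty with regular boundary. Then along the level curve {u₁ − u₂ = ε}, with tangent vector v = Rot_{π/2}(∇(u₁−u₂)), the conjugate differential Ψ = ψ₁ − ψ₂ satisfies dΨ(v) = λ²((W₁+W₂)/2)|η₁ − η₂|² > 0 wherever η₁ ≠ η₂; consequently ∫_{∂Ω_ε} dΨ > 0, contradicting closedness of dΨ, so the solution of the Jenkins–Serrin problem is unique (up to an additive constant when there are no arcs with finite continuous data). -/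
open Set

private lemma js_lem1 (a b c d l s t : ℝ) (hs : s^2 = 1+a^2+b^2) (ht : t^2 = 1+c^2+d^2)
    (hs0 : s ≠ 0) (ht0 : t ≠ 0) :
    (-(l*b/s) + l*d/t) * (-(l*(b-d))) + (l*a/s - l*c/t) * (l*(a-c)) =
    l^2*(s+t)*(s*t-1-a*c-b*d)/(s*t) := by
  field_simp
  linear_combination (-(l^2*t))*hs + (-(l^2*s))*ht

private lemma js_lem2 (a b c d l s t : ℝ) (hs : s^2 = 1+a^2+b^2) (ht : t^2 = 1+c^2+d^2)
    (hs0 : s ≠ 0) (ht0 : t ≠ 0) :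
    l^2 * ((s+t)/2) * ((a/s - c/t)^2 + (b/s-d/t)^2 + (1/s-1/t)^2) =
    l^2*(s+t)*(s*t-1-a*c-b*d)/(s*t) := by
  field_simp
  linear_combination (-(l^2*t^2*(s+t)))*hs + (-(l^2*s^2*(s+t)))*ht

private lemma js_key (a b c d l s t : ℝ) (hs : s^2 = 1+a^2+b^2) (ht : t^2 = 1+c^2+d^2)
    (hs0 : s ≠ 0) (ht0 : t ≠ 0) :
    (-(l*b/s) + l*d/t) * (-(l*(b-d))) + (l*a/s - l*c/t) * (l*(a-c)) =
    l^2 * ((s+t)/2) * ((a/s - c/t)^2 + (b/s-d/t)^2 + (1/s-1/t)^2) := by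
  rw [js_lem1 a b c d l s t hs ht hs0 ht0, js_lem2 a b c d l s t hs ht hs0 ht0]

private lemma js_pos (a b c d l s t : ℝ) (hs : s^2 = 1+a^2+b^2) (ht : t^2 = 1+c^2+d^2)
    (hs0 : 0 < s) (ht0 : 0 < t) (hl : 0 < l) (hne : (a, b) ≠ (c, d)) :
    0 < l^2 * ((s+t)/2) * ((a/s - c/t)^2 + (b/s-d/t)^2 + (1/s-1/t)^2) := by
  have hS : 0 < (a/s - c/t)^2 + (b/s-d/t)^2 + (1/s-1/t)^2 := by
    rcases (show (0:ℝ) ≤ (a/s - c/t)^2 + (b/s-d/t)^2 + (1/s-1/t)^2 by positivity).lt_or_eq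
      with h | h
    · exact h
    exfalso
    have h1 : (a/s - c/t)^2 = 0 := by
      nlinarith [sq_nonneg (a/s - c/t), sq_nonneg (b/s - d/t), sq_nonneg (1/s - 1/t)]
    have h2 : (b/s - d/t)^2 = 0 := by
      nlinarith [sq_nonneg (a/s - c/t), sq_nonneg (b/s - d/t), sq_nonneg (1/s - 1/t)]
    have h3 : (1/s - 1/t)^2 = 0 := by
      nlinarith [sq_nonneg (a/s - c/t), sq_nonneg (b/s - d/t), sq_nonneg (1/s - 1/t)]
    rw [pow_eq_zero_iff (two_ne_zero), sub_eq_zero] at h1 h2 h3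
    have hst : s = t := by
      rw [div_eq_div_iff hs0.ne' ht0.ne'] at h3; linarith
    subst hst
    have ha : a = c := by
      rw [div_eq_div_iff hs0.ne' hs0.ne'] at h1
      exact mul_right_cancel₀ hs0.ne' h1
    have hb : b = d := by
      rw [div_eq_div_iff hs0.ne' hs0.ne'] at h2
      exact mul_right_cancel₀ hs0.ne' h2
    exact hne (by rw [ha, hb])
  have h2 : 0 < l^2 * ((s+t)/2) := by positivity
  exact mul_pos h2 hS

/-- Auxiliary continuous function of the quintuple `(α₁, β₁, α₂, β₂, λ)`. -/
noncomputable def jsF (x : ℝ × ℝ × ℝ × ℝ × ℝ) : ℝ :=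
  (-(x.2.2.2.2 * x.2.1 / Real.sqrt (1 + x.1^2 + x.2.1^2))
    + x.2.2.2.2 * x.2.2.2.1 / Real.sqrt (1 + x.2.2.1^2 + x.2.2.2.1^2)) *
      (-(x.2.2.2.2 * (x.2.1 - x.2.2.2.1))) +
  (x.2.2.2.2 * x.1 / Real.sqrt (1 + x.1^2 + x.2.1^2)
    - x.2.2.2.2 * x.2.2.1 / Real.sqrt (1 + x.2.2.1^2 + x.2.2.2.1^2)) *
      (x.2.2.2.2 * (x.1 - x.2.2.1))

lemma jsF_continuous : Continuous jsF := by
  unfold jsF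
  fun_prop (disch := intros; positivity)

/-- **Uniqueness for the Jenkins–Serrin problem: the level-curve flux computation.**
u₁, u₂ are solutions of the minimal surface equation in Ω ⊆ ℍ² with conjugate
differential dΨ = dψ₁ − dψ₂, and v = Rot_{π/2}(∇(u₁−u₂)) = (−λ(β₁−β₂), λ(α₁−α₂)) is the
tangent vector to the level curves of u₁ − u₂.  Then pointwise
dΨ(v) = λ² ((W₁+W₂)/2) |η₁−η₂|², which is positive wherever η₁ ≠ η₂; consequently, for a
closed level curve γ (the regular boundary ∂Ω_ε of Ω_ε = {u₁−u₂ > ε}, which avoids the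
arcs Cₛ and on which dΨ ≠ 0 somewhere) the vanishing of ∫_γ dΨ (closedness of dΨ) is
contradictory — which forces the Jenkins–Serrin solution to be unique (up to an additive
constant when there are no arcs with finite continuous data). -/
theorem stmt_18 (Ω : Set (ℝ × ℝ)) (hΩopen : IsOpen Ω)
    (lam u₁ u₂ α₁ β₁ W₁ α₂ β₂ W₂ : ℝ × ℝ → ℝ)
    (hlampos : ∀ p ∈ Ω, 0 < lam p)
    (hu₁ : ContDiffOn ℝ 2 u₁ Ω) (hu₂ : ContDiffOn ℝ 2 u₂ Ω)
    (hα₁ : ∀ p ∈ Ω, α₁ p = pdy lam p / (lam p) ^ 2 - pdx u₁ p / lam p)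
    (hβ₁ : ∀ p ∈ Ω, β₁ p = -(pdx lam p / (lam p) ^ 2) - pdy u₁ p / lam p)
    (hα₂ : ∀ p ∈ Ω, α₂ p = pdy lam p / (lam p) ^ 2 - pdx u₂ p / lam p)
    (hβ₂ : ∀ p ∈ Ω, β₂ p = -(pdx lam p / (lam p) ^ 2) - pdy u₂ p / lam p)
    (hW₁ : ∀ p, W₁ p = Real.sqrt (1 + α₁ p ^ 2 + β₁ p ^ 2))
    (hW₂ : ∀ p, W₂ p = Real.sqrt (1 + α₂ p ^ 2 + β₂ p ^ 2))
    (hmse₁ : ∀ p ∈ Ω,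
      pdx (fun q => lam q * α₁ q / W₁ q) p + pdy (fun q => lam q * β₁ q / W₁ q) p = 0)
    (hmse₂ : ∀ p ∈ Ω,
      pdx (fun q => lam q * α₂ q / W₂ q) p + pdy (fun q => lam q * β₂ q / W₂ q) p = 0)
    (dPsi : ℝ × ℝ → ℝ × ℝ → ℝ)
    (hdPsi : ∀ p v, dPsi p v =
      (-(lam p * β₁ p / W₁ p) + lam p * β₂ p / W₂ p) * v.1
        + (lam p * α₁ p / W₁ p - lam p * α₂ p / W₂ p) * v.2)
    (v : ℝ × ℝ → ℝ × ℝ)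
    (hv : ∀ p, v p = (-(lam p * (β₁ p - β₂ p)), lam p * (α₁ p - α₂ p))) :
    (∀ p ∈ Ω, dPsi p (v p) = (lam p) ^ 2 * ((W₁ p + W₂ p) / 2) *
      ((α₁ p / W₁ p - α₂ p / W₂ p) ^ 2 + (β₁ p / W₁ p - β₂ p / W₂ p) ^ 2 +
        (1 / W₁ p - 1 / W₂ p) ^ 2)) ∧
    (∀ p ∈ Ω, (α₁ p, β₁ p) ≠ (α₂ p, β₂ p) → 0 < dPsi p (v p)) ∧
    (∀ γ : ℝ → ℝ × ℝ, ContDiffOn ℝ 1 γ (Icc 0 1) → γ 0 = γ 1 →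
      (∀ t ∈ Icc (0:ℝ) 1, γ t ∈ Ω) →
      (∀ t ∈ Icc (0:ℝ) 1, deriv γ t = v (γ t)) →
      ContinuousOn (fun p => (α₁ p, β₁ p, α₂ p, β₂ p, lam p)) Ω →
      (∃ t₀ ∈ Icc (0:ℝ) 1, (α₁ (γ t₀), β₁ (γ t₀)) ≠ (α₂ (γ t₀), β₂ (γ t₀))) →
      (∫ t in (0:ℝ)..1, dPsi (γ t) (deriv γ t)) = 0 →
      False) := by
  -- basic facts about W₁ W₂
  have hW₁pos : ∀ p, 0 < W₁ p := fun p => by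
    rw [hW₁ p]; exact Real.sqrt_pos.mpr (by positivity)
  have hW₂pos : ∀ p, 0 < W₂ p := fun p => by
    rw [hW₂ p]; exact Real.sqrt_pos.mpr (by positivity)
  have hW₁sq : ∀ p, (W₁ p)^2 = 1 + α₁ p ^ 2 + β₁ p ^ 2 := fun p => by
    rw [hW₁ p]; exact Real.sq_sqrt (by positivity)
  have hW₂sq : ∀ p, (W₂ p)^2 = 1 + α₂ p ^ 2 + β₂ p ^ 2 := fun p => by
    rw [hW₂ p]; exact Real.sq_sqrt (by positivity)
  -- Part 1
  have part1 : ∀ p ∈ Ω, dPsi p (v p) = (lam p) ^ 2 * ((W₁ p + W₂ p) / 2) *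
      ((α₁ p / W₁ p - α₂ p / W₂ p) ^ 2 + (β₁ p / W₁ p - β₂ p / W₂ p) ^ 2 +
        (1 / W₁ p - 1 / W₂ p) ^ 2) := by
    intro p hp
    rw [hdPsi, hv]
    exact js_key (α₁ p) (β₁ p) (α₂ p) (β₂ p) (lam p) (W₁ p) (W₂ p)
      (hW₁sq p) (hW₂sq p) (hW₁pos p).ne' (hW₂pos p).ne'
  -- Part 2
  have part2 : ∀ p ∈ Ω, (α₁ p, β₁ p) ≠ (α₂ p, β₂ p) → 0 < dPsi p (v p) := by
    intro p hp hne
    rw [part1 p hp]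
    exact js_pos (α₁ p) (β₁ p) (α₂ p) (β₂ p) (lam p) (W₁ p) (W₂ p)
      (hW₁sq p) (hW₂sq p) (hW₁pos p) (hW₂pos p) (hlampos p hp) hne
  refine ⟨part1, part2, ?_⟩
  -- Part 3
  intro γ hγ hclosed hγΩ hderiv hcont ⟨t₀, ht₀, hne₀⟩ hint
  set f : ℝ → ℝ := fun t => dPsi (γ t) (v (γ t)) with hf
  -- the integral of f vanishes
  have hEq : EqOn (fun t => dPsi (γ t) (deriv γ t)) f (uIcc (0:ℝ) 1) := by
    intro t ht
    rw [uIcc_of_le zero_le_one] at ht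
    simp only [hf, hderiv t ht]
  have hint' : (∫ t in (0:ℝ)..1, f t) = 0 := by
    rw [← intervalIntegral.integral_congr hEq]; exact hint
  -- f is nonnegative on [0,1]
  have hnonneg : ∀ t ∈ Icc (0:ℝ) 1, 0 ≤ f t := by
    intro t ht
    have h1 := part1 (γ t) (hγΩ t ht)
    show 0 ≤ dPsi (γ t) (v (γ t))
    rw [h1]
    have := (hW₁pos (γ t)).le
    have := (hW₂pos (γ t)).le
    positivity
  -- f is positive at t₀
  have hpos₀ : 0 < f t₀ := part2 (γ t₀) (hγΩ t₀ ht₀) hne₀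
  -- f is continuous on [0,1]
  have hγc : ContinuousOn γ (Icc 0 1) := hγ.continuousOn
  have hEqF : EqOn f (fun t => jsF (α₁ (γ t), β₁ (γ t), α₂ (γ t), β₂ (γ t), lam (γ t)))
      (Icc (0:ℝ) 1) := by
    intro t ht
    simp only [hf, jsF, hdPsi, hv]
    rw [hW₁ (γ t), hW₂ (γ t)]
  have hcontf : ContinuousOn f (Icc (0:ℝ) 1) := by
    refine ContinuousOn.congr ?_ hEqF
    exact jsF_continuous.comp_continuousOn (hcont.comp hγc (fun t ht => hγΩ t ht))
  -- integrability
  have hfi : IntervalIntegrable f MeasureTheory.volume 0 1 := by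
    apply ContinuousOn.intervalIntegrable
    rwa [uIcc_of_le zero_le_one]
  -- a.e. nonnegativity on Ι 0 1
  have hae : 0 ≤ᵐ[MeasureTheory.volume.restrict (uIoc (0:ℝ) 1)] f := by
    rw [uIoc_of_le zero_le_one]
    have h : ∀ᵐ t ∂(MeasureTheory.volume.restrict (Ioc (0:ℝ) 1)), 0 ≤ f t :=
      (MeasureTheory.ae_restrict_iff' measurableSet_Ioc).mpr
        (MeasureTheory.ae_of_all _ fun t ht => hnonneg t (Ioc_subset_Icc_self ht))
    filter_upwards [h] with t ht using ht
  -- find an open interval inside the support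
  have hct : ContinuousWithinAt f (Icc 0 1) t₀ := hcontf t₀ ht₀
  have hev : f ⁻¹' (Ioi 0) ∈ nhdsWithin t₀ (Icc (0:ℝ) 1) := hct (Ioi_mem_nhds hpos₀)
  rcases mem_nhdsWithin.mp hev with ⟨U, hUopen, ht₀U, hUsub⟩
  rcases Metric.isOpen_iff.mp hUopen t₀ ht₀U with ⟨δ, hδ, hball⟩
  have hlt : max (t₀ - δ) 0 < min (t₀ + δ) 1 := by
    apply lt_min
    · exact max_lt (by linarith) (by linarith [ht₀.1])
    · exact max_lt (by linarith [ht₀.2]) one_pos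
  have hJsub : Ioo (max (t₀ - δ) 0) (min (t₀ + δ) 1) ⊆ Function.support f ∩ Ioc 0 1 := by
    intro x hx
    have hx1 : t₀ - δ < x := lt_of_le_of_lt (le_max_left _ _) hx.1
    have hx0 : (0:ℝ) < x := lt_of_le_of_lt (le_max_right _ _) hx.1
    have hx2 : x < t₀ + δ := lt_of_lt_of_le hx.2 (min_le_left _ _)
    have hx3 : x < 1 := lt_of_lt_of_le hx.2 (min_le_right _ _)
    have hxball : x ∈ Metric.ball t₀ δ := by
      rw [Real.ball_eq_Ioo]; exact ⟨hx1, hx2⟩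
    have hxIcc : x ∈ Icc (0:ℝ) 1 := ⟨hx0.le, hx3.le⟩
    have hxpos : 0 < f x := hUsub ⟨hball hxball, hxIcc⟩
    exact ⟨hxpos.ne', hx0, hx3.le⟩
  have hpos_int : 0 < ∫ t in (0:ℝ)..1, f t := by
    rw [intervalIntegral.integral_pos_iff_support_of_nonneg_ae' hae hfi]
    refine ⟨one_pos, ?_⟩
    calc (0:ENNReal) < MeasureTheory.volume (Ioo (max (t₀ - δ) 0) (min (t₀ + δ) 1)) := by
          rw [Real.volume_Ioo]
          exact ENNReal.ofReal_pos.mpr (by linarith)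
      _ ≤ MeasureTheory.volume (Function.support f ∩ Ioc 0 1) :=
          MeasureTheory.measure_mono hJsub
  exact hpos_int.ne' hint'
end
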